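/- Let η(R, R₁) = R·(1 - P_co(R,R₁)) where for the L=1 Rayleigh model P_co(R,R₁) = 1 - exp(-(2^{R+R₁} - 1)/γ_d). For fixed R, η is strictly decreasing in R₁; hence the throughput-optimal R₁ subject to P_so(R₁) = exp(-(2^{R₁}-1)/γ_e) ≤ ξ_s is R₁* = log₂(1 - γ_e·ln ξ_s). -/

import Mathlib

open Real

theorem throughput_strictly_decreasing_and_optimal_R1
    (γd γe ξs R : ℝ) (hγd : 0 < γd) (hγe : 0 < γe)
    (hξs : ξs ∈ Set.Ioo (0 : ℝ) 1) (hR : 0 < R) :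
    StrictAnti (fun R₁ : ℝ => R * exp (-((2 : ℝ) ^ (R + R₁) - 1) / γd)) ∧
    (0 ≤ logb 2 (1 - γe * Real.log ξs) ∧
      exp (-((2 : ℝ) ^ (logb 2 (1 - γe * Real.log ξs)) - 1) / γe) ≤ ξs ∧
      ∀ R₁ : ℝ, 0 ≤ R₁ → exp (-((2 : ℝ) ^ R₁ - 1) / γe) ≤ ξs →
        R * exp (-((2 : ℝ) ^ (R + R₁) - 1) / γd) ≤
          R * exp (-((2 : ℝ) ^ (R + logb 2 (1 - γe * Real.log ξs)) - 1) / γd)) := by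
  obtain ⟨hξ0, hξ1⟩ := hξs
  have hlog : Real.log ξs < 0 := Real.log_neg hξ0 hξ1
  have h1 : (1 : ℝ) ≤ 1 - γe * Real.log ξs := by nlinarith
  have h0 : (0 : ℝ) < 1 - γe * Real.log ξs := by linarith
  have hrpow : (2 : ℝ) ^ (logb 2 (1 - γe * Real.log ξs)) = 1 - γe * Real.log ξs :=
    Real.rpow_logb (by norm_num) (by norm_num) h0
  constructor
  · intro a b hab
    dsimp only
    have h2 : (2 : ℝ) ^ (R + a) < (2 : ℝ) ^ (R + b) :=
      Real.rpow_lt_rpow_left_iff (by norm_num : (1:ℝ) < 2) |>.mpr (by linarith)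
    have : -((2 : ℝ) ^ (R + b) - 1) / γd < -((2 : ℝ) ^ (R + a) - 1) / γd := by
      gcongr
    exact mul_lt_mul_of_pos_left (Real.exp_lt_exp.mpr this) hR
  refine ⟨?_, ?_, ?_⟩
  · exact Real.logb_nonneg (by norm_num) h1
  · rw [hrpow]
    have : -((1 - γe * Real.log ξs) - 1) / γe = Real.log ξs := by
      field_simp
      ring
    rw [this, Real.exp_log hξ0]
  · intro R₁ _ hcon
    have hkey : (2 : ℝ) ^ (logb 2 (1 - γe * Real.log ξs)) ≤ (2 : ℝ) ^ R₁ := by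
      rw [hrpow]
      have := Real.log_le_log (Real.exp_pos _) hcon
      rw [Real.log_exp] at this
      have h2pos : (0 : ℝ) < (2 : ℝ) ^ R₁ := Real.rpow_pos_of_pos (by norm_num) _
      have h3 := (div_le_iff₀ hγe).mp this
      nlinarith
    have h2 : (2 : ℝ) ^ (R + logb 2 (1 - γe * Real.log ξs)) ≤ (2 : ℝ) ^ (R + R₁) := by
      rw [Real.rpow_add (by norm_num), Real.rpow_add (by norm_num)]
      exact mul_le_mul_of_nonneg_left hkey (Real.rpow_pos_of_pos (by norm_num) _).le
    have : -((2 : ℝ) ^ (R + R₁) - 1) / γd ≤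
        -((2 : ℝ) ^ (R + logb 2 (1 - γe * Real.log ξs)) - 1) / γd := by
      gcongr
    exact mul_le_mul_of_nonneg_left (Real.exp_le_exp.mpr this) hR.le
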